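/- arXiv:math/0601360 — 4 statements merged into one kernel-verified Lean document; each statement's English description precedes it below -/
import Mathlib

section
/- Let p be an odd prime, q a power of p, and consider the twisted polynomial ring F_q[F] where F acts as the q-power Frobenius (so multiplication satisfies F·c = c^q·F for c in F_q). Define the ring homomorphism φ from F_q[t] to F_q[F] determined by φ(t) = F + F^2. Then for a ∈ F_q[t], the element φ(a) is a sum of exactly two distinct powers of F (i.e., φ(a) = F^n + F^m for some naturals n ≠ m) if and only if a = t^(p^k) for some k ≥ 0, in which case φ(a) = F^(p^k) + F^(2p^k). -/
open Polynomial

section Aux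

variable {p : ℕ} [Fact p.Prime]

private lemma aeval_eq_comp' (a x : (ZMod p)[X]) : aeval x a = a.comp x := by
  rw [Polynomial.comp, aeval_def, Polynomial.algebraMap_eq]

private lemma two_ne' (hp : Odd p) : (2 : ZMod p) ≠ 0 := by
  intro h
  have pp : p.Prime := Fact.out
  have h2 : p ∣ 2 := by
    have := (ZMod.natCast_eq_zero_iff 2 p).mp (by push_cast; exact h)
    exact this
  have hp2 : p = 2 := (Nat.prime_dvd_prime_iff_eq pp Nat.prime_two).mp h2
  rw [hp2] at hp
  exact absurd hp (by decide)

private lemma neg_one_ne' : (-1 : ZMod p) ≠ 0 :=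
  neg_ne_zero.mpr one_ne_zero

private lemma onetwoX_ne (hp : Odd p) : (1 + 2 * X : (ZMod p)[X]) ≠ 0 := by
  intro h
  have := congrArg (fun q => coeff q 1) h
  simp [coeff_one] at this
  exact two_ne' hp this

private lemma coeff_s_pow (j i : ℕ) :
    ((-1 - X : (ZMod p)[X]) ^ j).coeff i = (-1) ^ j * (j.choose i) := by
  rw [show (-1 - X : (ZMod p)[X]) = -(X + 1) by ring, neg_pow]
  rw [show ((-1 : (ZMod p)[X])) ^ j = C ((-1 : ZMod p) ^ j) by simp]
  rw [coeff_C_mul, coeff_X_add_one_pow]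

private lemma w_natdeg : (X + X ^ 2 : (ZMod p)[X]) ≠ C ((X + X ^ 2 : (ZMod p)[X]).coeff 0) := by
  intro h
  have := congrArg (fun q => coeff q 2) h
  simp [coeff_X_pow, coeff_X] at this

private lemma key (hp : Odd p) :
    ∀ m : ℕ, ∀ n : ℕ, ∀ a : (ZMod p)[X], n < m →
      aeval (X + X ^ 2 : (ZMod p)[X]) a = X ^ n + X ^ m →
      ∃ k : ℕ, a = X ^ (p ^ k) ∧ n = p ^ k ∧ m = 2 * p ^ k := by
  intro m
  induction m using Nat.strong_induction_on with
  | _ m IH =>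
    intro n a hnm h
    have pp : p.Prime := Fact.out
    have hp0 : 0 < p := pp.pos
    have hp1 : 1 < p := pp.one_lt
    by_cases hda : derivative a = 0
    · -- a = expand p b
      have hae : Polynomial.expand (ZMod p) p (Polynomial.contract p a) = a :=
        Polynomial.expand_contract p hda pp.ne_zero
      set b := Polynomial.contract p a with hb
      have hew : Polynomial.expand (ZMod p) p (X + X ^ 2 : (ZMod p)[X]) = (X + X ^ 2) ^ p := by
        rw [map_add, map_pow, expand_X, add_pow_char, ← pow_mul, ← pow_mul, mul_comm 2 p]
      have h2 : Polynomial.expand (ZMod p) p (aeval (X + X ^ 2 : (ZMod p)[X]) b)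
          = X ^ n + X ^ m := by
        rw [← Polynomial.aeval_algHom_apply, hew, ← Polynomial.expand_aeval, hae, h]
      have hn : p ∣ n := by
        by_contra hdvd
        have := congrArg (fun q => coeff q n) h2
        simp [Polynomial.coeff_expand hp0, hdvd, coeff_X_pow, hnm.ne] at this
      have hm : p ∣ m := by
        by_contra hdvd
        have := congrArg (fun q => coeff q m) h2
        simp [Polynomial.coeff_expand hp0, hdvd, coeff_X_pow, hnm.ne'] at this
      have h3 : Polynomial.expand (ZMod p) p (aeval (X + X ^ 2 : (ZMod p)[X]) b)
          = Polynomial.expand (ZMod p) p (X ^ (n / p) + X ^ (m / p)) := by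
        rw [h2, map_add, map_pow, map_pow, expand_X, ← pow_mul, ← pow_mul,
          Nat.mul_div_cancel' hn, Nat.mul_div_cancel' hm]
      have h4 := Polynomial.expand_injective hp0 h3
      have hmp : m / p < m := Nat.div_lt_self (by omega) hp1
      have hnp : n / p < m / p := by
        have h5 : n / p * p < m / p * p := by
          rw [Nat.div_mul_cancel hn, Nat.div_mul_cancel hm]; exact hnm
        exact Nat.lt_of_mul_lt_mul_right h5
      obtain ⟨k, hbk, hnk, hmk⟩ := IH (m / p) hmp (n / p) b hnp h4
      refine ⟨k + 1, ?_, ?_, ?_⟩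
      · rw [← hae, hbk, map_pow, expand_X, ← pow_mul, pow_succ]
        ring_nf
      · have : n = p * (n / p) := (Nat.mul_div_cancel' hn).symm
        rw [this, hnk, pow_succ]; ring
      · have : m = p * (m / p) := (Nat.mul_div_cancel' hm).symm
        rw [this, hmk, pow_succ]; ring
    · -- derivative a ≠ 0 : show n = 1, m = 2, a = X
      have hcomp : a.comp (X + X ^ 2 : (ZMod p)[X]) = X ^ n + X ^ m := by
        rw [← aeval_eq_comp', h]
      have hdw : derivative (X + X ^ 2 : (ZMod p)[X]) = 1 + 2 * X := by
        simp [derivative_X_pow, map_ofNat]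
        norm_num
      have hdwne : derivative (X + X ^ 2 : (ZMod p)[X]) ≠ 0 := by
        rw [hdw]; exact onetwoX_ne hp
      have hDne : derivative (X ^ n + X ^ m : (ZMod p)[X]) ≠ 0 := by
        rw [← hcomp, derivative_comp]
        apply mul_ne_zero hdwne
        intro h0
        rcases Polynomial.comp_eq_zero_iff.mp h0 with h1 | ⟨_, h2⟩
        · exact hda h1
        · exact w_natdeg h2
      -- symmetry
      have e1 : aeval (-1 - X : (ZMod p)[X]) (X + X ^ 2 : (ZMod p)[X]) = X + X ^ 2 := by
        simp only [map_add, map_pow, aeval_X]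
        ring
      have hs : (-1 - X : (ZMod p)[X]) ^ n + (-1 - X) ^ m = X ^ n + X ^ m := by
        have : aeval (-1 - X : (ZMod p)[X]) (X ^ n + X ^ m : (ZMod p)[X])
            = (-1 - X : (ZMod p)[X]) ^ n + (-1 - X) ^ m := by
          simp only [map_add, map_pow, aeval_X]
        rw [← this, ← h, ← Polynomial.aeval_algHom_apply, e1, h]
      have hdsneg : derivative (-1 - X : (ZMod p)[X]) = -1 := by
        simp
      have hD : C (n : ZMod p) * (-1 - X : (ZMod p)[X]) ^ (n - 1) * (-1)
            + C (m : ZMod p) * (-1 - X) ^ (m - 1) * (-1)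
          = C (n : ZMod p) * X ^ (n - 1) + C (m : ZMod p) * X ^ (m - 1) := by
        have := congrArg derivative hs
        simpa [derivative_pow, derivative_X_pow, hdsneg] using this
      by_cases hm0 : (m : ZMod p) = 0
      · -- p ∣ m case: contradiction
        have hn0 : (n : ZMod p) ≠ 0 := by
          intro hn0
          apply hDne
          simp [derivative_X_pow, hn0, hm0]
        have hD' : (-1 - X : (ZMod p)[X]) ^ (n - 1) * (-1) = X ^ (n - 1) := by
          have h5 : C (n : ZMod p) * ((-1 - X : (ZMod p)[X]) ^ (n - 1) * (-1))
              = C (n : ZMod p) * X ^ (n - 1) := by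
            rw [← mul_assoc]
            have := hD
            rw [hm0] at this
            simpa using this
          exact mul_left_cancel₀ (Polynomial.C_ne_zero.mpr hn0) h5
        have hn1 : 1 ≤ n := by
          rcases Nat.eq_zero_or_pos n with h6 | h6
          · exfalso; apply hn0; rw [h6]; simp
          · exact h6
        have hev := congrArg (fun q => coeff q 0) hD'
        simp only [mul_neg_one, coeff_neg, coeff_s_pow, coeff_X_pow, Nat.choose_zero_right,
          Nat.cast_one, mul_one] at hev
        rcases Nat.lt_or_ge n 2 with h7 | h7
        · -- n = 1
          have he0 : n - 1 = 0 := by omega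
          rw [he0] at hev
          simp at hev
          exact absurd (by linear_combination -hev) (two_ne' hp)
        · rw [if_neg (by omega : ¬ 0 = n - 1)] at hev
          exact absurd (neg_eq_zero.mp hev) (pow_ne_zero _ (neg_one_ne' (p := p)))
      · -- p ∤ m
        have hm1 : 1 ≤ m := by omega
        have hc1 := congrArg (fun q => coeff q m) hs
        simp only [coeff_add, coeff_s_pow, coeff_X_pow, hnm.ne', Nat.choose_self,
          Nat.choose_eq_zero_of_lt hnm, Nat.cast_zero, Nat.cast_one, mul_zero, mul_one,
          if_neg (show ¬ m = n from hnm.ne'), if_pos rfl] at hc1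
        -- hc1 : (-1)^m = 1  (after zero_add)
        have hc1' : ((-1 : ZMod p)) ^ m = 1 := by simpa using hc1
        have hmeven : Even m := by
          by_contra hodd
          rw [Nat.not_even_iff_odd] at hodd
          rw [hodd.neg_one_pow] at hc1'
          exact two_ne' hp (by linear_combination -hc1')
        have hm2le : 2 ≤ m := by
          rcases hmeven with ⟨t, ht⟩; omega
        -- coefficient at m - 1
        have hc2 := congrArg (fun q => coeff q (m - 1)) hs
        simp only [coeff_add, coeff_s_pow, coeff_X_pow] at hc2
        have hchm : m.choose (m - 1) = m := by
          rw [Nat.choose_symm hm1, Nat.choose_one_right]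
        by_cases hn' : n = m - 1
        · -- n = m - 1
          have hnodd : Odd n := by
            rw [hn']
            exact Nat.Even.sub_odd hm1 hmeven odd_one
          rw [hn', Nat.choose_self, hchm, hc1'] at hc2
          have hnodd2 : Odd (m - 1) := hn' ▸ hnodd
          rw [hnodd2.neg_one_pow, if_pos rfl, if_neg (by omega : ¬ m - 1 = m)] at hc2
          push_cast at hc2
          -- hc2 : -1 * 1 + 1 * m = 1 + 0
          have hm2 : (m : ZMod p) = 2 := by linear_combination hc2
          have hncast : (n : ZMod p) = 1 := by
            rw [hn', Nat.cast_sub hm1, hm2]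
            norm_num
          -- now the derivative identity
          have hCn : (C ((n : ZMod p)) : (ZMod p)[X]) = 1 := by rw [hncast, map_one]
          have hCm : (C ((m : ZMod p)) : (ZMod p)[X]) = 2 := by rw [hm2, map_ofNat]
          have e2 : n - 1 = m - 2 := by omega
          have e3 : m - 1 = (m - 2) + 1 := by omega
          rw [hCn, hCm, e2, e3, pow_succ, pow_succ] at hD
          have hfac : ((-1 - X : (ZMod p)[X]) ^ (m - 2) - X ^ (m - 2)) * (1 + 2 * X) = 0 := by
            linear_combination hD
          have hssx : (-1 - X : (ZMod p)[X]) ^ (m - 2) = X ^ (m - 2) := by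
            rcases mul_eq_zero.mp hfac with h8 | h8
            · exact sub_eq_zero.mp h8
            · exact absurd h8 (onetwoX_ne hp)
          have hmtwo : m = 2 := by
            by_contra hm2'
            have hm3 : 3 ≤ m := by omega
            have hev := congrArg (fun q => eval 0 q) hssx
            simp only [eval_pow, eval_sub, eval_neg, eval_one, eval_X, sub_zero] at hev
            rw [zero_pow (by omega : m - 2 ≠ 0)] at hev
            exact pow_ne_zero _ neg_one_ne' hev
          have hnone : n = 1 := by omega
          refine ⟨0, ?_, by simpa using hnone, by simpa using hmtwo⟩
          -- a = X
          have hfin : (a - X).comp (X + X ^ 2 : (ZMod p)[X]) = 0 := by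
            rw [sub_comp, X_comp, hcomp, hnone, hmtwo]
            ring
          rcases Polynomial.comp_eq_zero_iff.mp hfin with h9 | ⟨_, h9⟩
          · have : a = X := by linear_combination h9
            simpa using this
          · exact absurd h9 w_natdeg
        · -- n < m - 1 : contradiction, m ≡ 0
          have hnlt : n < m - 1 := by omega
          rw [Nat.choose_eq_zero_of_lt hnlt, hchm, hc1',
            if_neg (by omega : ¬ m - 1 = n), if_neg (by omega : ¬ m - 1 = m)] at hc2
          push_cast at hc2
          exact absurd (show (m:ZMod p) = 0 by linear_combination hc2) hm0

end Aux

theorem stmt0 (p : ℕ) [Fact p.Prime] (hp : Odd p) (a : Polynomial (ZMod p)) :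
    ((∃ n m : ℕ, n ≠ m ∧
        Polynomial.aeval ((Polynomial.X : Polynomial (ZMod p)) + Polynomial.X ^ 2) a =
          Polynomial.X ^ n + Polynomial.X ^ m) ↔
      ∃ k : ℕ, a = Polynomial.X ^ (p ^ k)) ∧
    ∀ k : ℕ,
      Polynomial.aeval ((Polynomial.X : Polynomial (ZMod p)) + Polynomial.X ^ 2)
          ((Polynomial.X : Polynomial (ZMod p)) ^ (p ^ k)) =
        Polynomial.X ^ (p ^ k) + Polynomial.X ^ (2 * p ^ k) := by
  have pp : p.Prime := Fact.out
  have heasy : ∀ k : ℕ,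
      Polynomial.aeval ((Polynomial.X : Polynomial (ZMod p)) + Polynomial.X ^ 2)
          ((Polynomial.X : Polynomial (ZMod p)) ^ (p ^ k)) =
        Polynomial.X ^ (p ^ k) + Polynomial.X ^ (2 * p ^ k) := by
    intro k
    rw [map_pow, aeval_X, add_pow_char_pow, ← pow_mul]
  refine ⟨⟨?_, ?_⟩, heasy⟩
  · rintro ⟨n, m, hne, h⟩
    rcases lt_or_gt_of_ne hne with hlt | hlt
    · obtain ⟨k, hk, -, -⟩ := key hp m n a hlt h
      exact ⟨k, hk⟩
    · rw [add_comm (X ^ n) (X ^ m)] at h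
      obtain ⟨k, hk, -, -⟩ := key hp n m a hlt h
      exact ⟨k, hk⟩
  · rintro ⟨k, rfl⟩
    refine ⟨p ^ k, 2 * p ^ k, ?_, heasy k⟩
    have hpk : 0 < p ^ k := Nat.pow_pos pp.pos
    omega
end

section
/- Let p be an odd prime and n a positive natural number. The polynomial (X + X^2)^n over F_p has exactly two nonzero terms if and only if n is a power of p. -/
open Polynomial Finset

private lemma aux_pow_of_dvd (p : ℕ) [Fact p.Prime] (n : ℕ) (hn : 0 < n)
    (h : ∀ k, 0 < k → k < n → p ∣ n.choose k) : ∃ a, n = p ^ a := by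
  have hp := (Fact.out : p.Prime)
  refine ⟨padicValNat p n, ?_⟩
  set v := padicValNat p n with hv
  by_contra hne
  have hdvd : p ^ v ∣ n := pow_padicValNat_dvd
  have hle : p ^ v ≤ n := Nat.le_of_dvd hn hdvd
  have hlt : p ^ v < n := lt_of_le_of_ne hle (fun h => hne h.symm)
  have hpv : 0 < p ^ v := pow_pos hp.pos v
  have hd := h (p ^ v) hpv hlt
  have hna : n < p ^ n := Nat.lt_pow_self hp.one_lt
  have hva : v < n := (pow_lt_pow_iff_right₀ hp.one_lt).mp (hlt.trans hna)
  have hka : p ^ v < p ^ n := hlt.trans hna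
  have hlucas := Choose.choose_modEq_prod_range_choose_nat (p := p) hna hka
  have hdnz : ¬ p ∣ n / p ^ v := by
    intro hc
    exact pow_succ_padicValNat_not_dvd (p := p) hn.ne'
      (by rw [pow_succ]
          rcases hc with ⟨c, hc⟩
          exact ⟨c, by rw [mul_assoc, ← hc, Nat.mul_div_cancel' hdvd]⟩)
  have hdig : n / p ^ v % p ≠ 0 := fun hc => hdnz (Nat.dvd_of_mod_eq_zero hc)
  have hprod : ∏ i ∈ range n, Nat.choose (n / p ^ i % p) (p ^ v / p ^ i % p)
      = n / p ^ v % p := by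
    rw [Finset.prod_eq_single v]
    · rw [Nat.div_self hpv, Nat.mod_eq_of_lt hp.one_lt, Nat.choose_one_right]
    · intro i _ hne'
      rcases lt_or_gt_of_ne hne' with h1 | h2
      · have h3 : p ^ v / p ^ i = p ^ (v - i) := Nat.pow_div h1.le hp.pos
        have h4 : p ^ (v - i) % p = 0 :=
          Nat.mod_eq_zero_of_dvd (dvd_pow_self p (Nat.sub_ne_zero_of_lt h1))
        rw [h3, h4, Nat.choose_zero_right]
      · rw [Nat.div_eq_of_lt (Nat.pow_lt_pow_right hp.one_lt h2), Nat.zero_mod,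
          Nat.choose_zero_right]
    · intro hv'; exact absurd (mem_range.mpr hva) hv'
  rw [Nat.ModEq, hprod] at hlucas
  rw [Nat.mod_eq_of_lt (Nat.mod_lt _ hp.pos)] at hlucas
  have hz : n.choose (p ^ v) % p = 0 := Nat.mod_eq_zero_of_dvd hd
  rw [hz] at hlucas
  exact hdig hlucas.symm

theorem stmt1 (p : ℕ) [Fact p.Prime] (hp : Odd p) (n : ℕ) (hn : 0 < n) :
    (((Polynomial.X + Polynomial.X ^ 2 : Polynomial (ZMod p)) ^ n).support.card = 2) ↔
      ∃ k : ℕ, n = p ^ k := by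
  have hpp := (Fact.out : p.Prime)
  have hcoeff : ∀ k : ℕ, ((X + X ^ 2 : Polynomial (ZMod p)) ^ n).coeff (k + n)
      = (n.choose k : ZMod p) := by
    intro k
    have he : (X + X ^ 2 : Polynomial (ZMod p)) ^ n = X ^ n * (X + 1) ^ n := by
      rw [← mul_pow]; ring_nf
    rw [he, (commute_X_pow _ n).eq, Polynomial.coeff_mul_X_pow, coeff_X_add_one_pow]
  constructor
  · intro hcard
    have hmemn : n ∈ ((X + X ^ 2 : Polynomial (ZMod p)) ^ n).support := by
      have h0 := hcoeff 0
      rw [zero_add] at h0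
      rw [mem_support_iff, h0]
      simp
    have hmem2n : 2 * n ∈ ((X + X ^ 2 : Polynomial (ZMod p)) ^ n).support := by
      have h0 := hcoeff n
      rw [show n + n = 2 * n by ring] at h0
      rw [mem_support_iff, h0]
      simp
    have hne : n ≠ 2 * n := by omega
    have hsub : ({n, 2 * n} : Finset ℕ) ⊆ ((X + X ^ 2 : Polynomial (ZMod p)) ^ n).support := by
      intro x hx
      rcases Finset.mem_insert.mp hx with rfl | hx
      · exact hmemn
      · rw [Finset.mem_singleton.mp hx]; exact hmem2n
    have heq : ({n, 2 * n} : Finset ℕ) = ((X + X ^ 2 : Polynomial (ZMod p)) ^ n).support :=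
      Finset.eq_of_subset_of_card_le hsub (by rw [hcard, card_pair hne])
    apply aux_pow_of_dvd p n hn
    intro k hk hkn
    have hnot : k + n ∉ ({n, 2 * n} : Finset ℕ) := by
      simp only [Finset.mem_insert, Finset.mem_singleton]
      omega
    rw [heq, Polynomial.mem_support_iff, not_not, hcoeff] at hnot
    exact (ZMod.natCast_eq_zero_iff _ _).mp hnot
  · rintro ⟨k, rfl⟩
    have hfr : (X + X ^ 2 : Polynomial (ZMod p)) ^ p ^ k
        = X ^ p ^ k + (X ^ 2) ^ p ^ k := add_pow_char_pow _ _ p k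
    rw [hfr, ← pow_mul]
    have h1 : (X : Polynomial (ZMod p)) ^ p ^ k + X ^ (2 * p ^ k)
        = C 1 * X ^ p ^ k + C 1 * X ^ (2 * p ^ k) := by simp
    have hne : p ^ k ≠ 2 * p ^ k := by
      have := pow_pos hpp.pos k; omega
    rw [h1, support_binomial hne one_ne_zero one_ne_zero, card_pair hne]
end

section
/- Let p = 2 and consider the ring homomorphism φ from F_2[t] to F_2[F] (commutative polynomials) determined by φ(t) = F + F^3. Then for a ∈ F_2[t], φ(a) is a sum of exactly two distinct powers of F if and only if a = t^(2^k) for some k ≥ 0, in which case φ(a) = F^(2^k) + F^(3·2^k). -/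
open Polynomial
abbrev R2 := Polynomial (ZMod 2)
noncomputable def uu : R2 := X + X^3

lemma sq_eq_expand (g : R2) : g^2 = expand (ZMod 2) 2 g := by
  have h := Polynomial.map_frobenius_expand (p := 2) (f := g)
  have hf : frobenius (ZMod 2) 2 = RingHom.id (ZMod 2) := by
    ext x; simp [frobenius_def, ZMod.pow_card]
  rw [hf, Polynomial.map_id] at h
  exact h.symm

def Ev (g : R2) : Prop := ∀ k, ¬ (2 ∣ k) → g.coeff k = 0
def Od (g : R2) : Prop := ∀ k, (2 ∣ k) → g.coeff k = 0

lemma ev_sq (g : R2) : Ev (g^2) := by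
  intro k hk
  rw [sq_eq_expand, coeff_expand two_pos, if_neg hk]

lemma od_X_mul_sq (g : R2) : Od (X * g^2) := by
  intro k hk
  cases k with
  | zero => simp
  | succ n =>
    rw [coeff_X_mul]
    apply ev_sq
    omega

lemma ev_X_pow (n : ℕ) (h : 2 ∣ n) : Ev (X ^ n : R2) := by
  intro k hk
  rw [coeff_X_pow, if_neg]; omega

lemma od_X_pow (n : ℕ) (h : ¬ 2 ∣ n) : Od (X ^ n : R2) := by
  intro k hk
  rw [coeff_X_pow, if_neg]; omega

lemma ev_add {g h : R2} (hg : Ev g) (hh : Ev h) : Ev (g + h) := by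
  intro k hk; rw [coeff_add, hg k hk, hh k hk, add_zero]

lemma od_add {g h : R2} (hg : Od g) (hh : Od h) : Od (g + h) := by
  intro k hk; rw [coeff_add, hg k hk, hh k hk, add_zero]

lemma od_zero : Od (0 : R2) := fun k _ => by simp

lemma parity_split {E1 O1 E2 O2 : R2} (hE1 : Ev E1) (hO1 : Od O1) (hE2 : Ev E2)
    (hO2 : Od O2) (h : E1 + O1 = E2 + O2) : E1 = E2 ∧ O1 = O2 := by
  constructor <;> ext k <;> by_cases hk : 2 ∣ k
  · have := congrArg (fun p => Polynomial.coeff p k) h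
    simpa [hO1 k hk, hO2 k hk] using this
  · rw [hE1 k hk, hE2 k hk]
  · rw [hO1 k hk, hO2 k hk]
  · have := congrArg (fun p => Polynomial.coeff p k) h
    simpa [hE1 k hk, hE2 k hk] using this

lemma sq_inj {g h : R2} (H : g^2 = h^2) : g = h := by
  have h2 : (g + h)^2 = 0 := by
    rw [CharTwo.add_sq, H, CharTwo.add_self_eq_zero]
  have h3 := pow_eq_zero_iff (n := 2) (by norm_num) |>.mp h2
  have := eq_neg_of_add_eq_zero_left h3
  rwa [CharTwo.neg_eq] at this

lemma exists_sq_decomp (a : R2) : ∃ b c : R2, a = b^2 + X * c^2 := by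
  refine ⟨contract 2 a, contract 2 a.divX, ?_⟩
  ext k
  rw [coeff_add, sq_eq_expand, sq_eq_expand]
  rcases Nat.even_or_odd k with hk | hk
  · obtain ⟨j, rfl⟩ := hk
    have h2 : 2 ∣ j + j := ⟨j, by ring⟩
    rcases Nat.eq_zero_or_pos j with rfl | hj
    · simp [coeff_expand two_pos, coeff_contract]
    · have : j + j = (j + j - 1) + 1 := by omega
      rw [this, coeff_X_mul, coeff_expand two_pos, coeff_expand two_pos, ← this,
        if_pos h2, if_neg (by omega), coeff_contract (by norm_num)]
      have : (j+j)/2*2 = j+j := by omega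
      rw [this, add_zero]
  · obtain ⟨j, rfl⟩ := hk
    rw [show 2*j+1 = (2*j)+1 from rfl, coeff_X_mul, coeff_expand two_pos,
      coeff_expand two_pos, if_neg (by omega), if_pos ⟨j, by ring⟩,
      coeff_contract (by norm_num), coeff_divX]
    have : 2*j/2*2 = 2*j := by omega
    rw [this, zero_add]

lemma aeval_eq_comp (c : R2) : aeval uu c = c.comp uu := by
  rw [aeval_def, algebraMap_eq]; rfl

lemma uu_eval0 : uu.eval 0 = 0 := by simp [uu]
lemma uu_eval1 : uu.eval 1 = 0 := by simp [uu]; decide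

lemma phi_eval0 (c : R2) : (aeval uu c).eval 0 = c.eval 0 := by
  rw [aeval_eq_comp, eval_comp, uu_eval0]
lemma phi_eval1 (c : R2) : (aeval uu c).eval 1 = c.eval 0 := by
  rw [aeval_eq_comp, eval_comp, uu_eval1]

lemma uu_natDegree : uu.natDegree = 3 := by
  unfold uu; compute_degree!

lemma phi_eq_zero {c : R2} (h : aeval uu c = 0) : c = 0 := by
  rw [aeval_eq_comp] at h
  rcases comp_eq_zero_iff.mp h with h1 | ⟨_, h2⟩
  · exact h1
  · exfalso
    have := congrArg (fun p => Polynomial.coeff p 1) h2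
    simp [uu, coeff_X_pow, coeff_C] at this

lemma phi_eq_X_pow {c : R2} {e : ℕ} (h : aeval uu c = X ^ e) : e = 0 ∧ c = 1 := by
  have h0 : c.eval 0 = (0:ZMod 2)^e := by
    have := phi_eval0 c; rw [h] at this; simpa using this.symm
  have h1 : c.eval 0 = 1 := by
    have := phi_eval1 c; rw [h] at this; simpa using this.symm
  have he : e = 0 := by
    by_contra hne
    rw [zero_pow hne] at h0
    rw [h0] at h1; exact one_ne_zero h1.symm
  subst he
  refine ⟨rfl, ?_⟩
  have hdeg : c.natDegree * 3 = 0 := by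
    have := natDegree_comp (p := c) (q := uu)
    rw [← aeval_eq_comp, h, uu_natDegree] at this
    simpa using this.symm
  have : c.natDegree = 0 := by omega
  obtain ⟨α, rfl⟩ : ∃ α, c = C α := ⟨c.coeff 0, (eq_C_of_natDegree_eq_zero this)⟩
  rw [aeval_C, algebraMap_eq] at h
  rw [h, pow_zero]

lemma two_zero : (2 : R2) = 0 := CharTwo.two_eq_zero

lemma hX1ne : (1 + X : R2) ≠ 0 := by
  intro h
  have := congrArg (fun p => Polynomial.coeff p 0) h
  simp at this

lemma hXne : (X : R2) ≠ 0 := X_ne_zero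

lemma uu_eq : uu = X * (1+X)^2 := by
  unfold uu
  linear_combination (-(X^2) : R2) * two_zero

lemma natDeg_one_add_X : (1 + X : R2).natDegree = 1 := by
  rw [show (1 + X : R2) = X + C 1 by rw [Polynomial.C_1, add_comm]]
  exact natDegree_X_add_C 1

lemma natDeg_one_add_X_sq : ((1 + X : R2)^2).natDegree = 2 := by
  have h : ((1 + X : R2))^2 = X^2 + C 1 := by
    rw [Polynomial.C_1]
    linear_combination (X : R2) * two_zero
  rw [h]; exact natDegree_X_pow_add_C

lemma phi_sq_decomp (b c : R2) :
    aeval uu (b^2 + X * c^2) = (aeval uu b)^2 + uu * (aeval uu c)^2 := by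
  simp [map_add, map_mul, map_pow]

lemma Qlem : ∀ f : ℕ, ∀ c : R2, ∀ e : ℕ, e < f → (1+X) * aeval uu c = X^e + X^f →
    c = 1 ∧ e = 0 ∧ f = 1 := by
  intro f
  induction f using Nat.strong_induction_on with
  | _ f IH =>
  intro c e hef heq
  by_cases hf : f = e + 1
  · -- (1+X)^2 φ c = (1+X)(X^e + X^(e+1)) = (1+X)^2 X^e, cancel
    subst hf
    have h2 : (1+X)^2 * aeval uu c = (1+X)^2 * X^e := by
      calc (1+X)^2 * aeval uu c = (1+X) * ((1+X) * aeval uu c) := by ring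
        _ = (1+X) * (X^e + X^(e+1)) := by rw [heq]
        _ = (1+X)^2 * X^e := by ring
    have h3 : aeval uu c = X^e := mul_left_cancel₀ (pow_ne_zero 2 hX1ne) h2
    obtain ⟨he, hc⟩ := phi_eq_X_pow h3
    exact ⟨hc, he, by omega⟩
  · have hef2 : e + 2 ≤ f := by omega
    obtain ⟨b, c₁, rfl⟩ := exists_sq_decomp c
    have key : ((1+X) * aeval uu b)^2 + X * ((1+X)^2 * aeval uu c₁)^2
        = (X^e + X^(e+1)) + (X^f + X^(f+1)) := by
      calc ((1+X) * aeval uu b)^2 + X * ((1+X)^2 * aeval uu c₁)^2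
          = (1+X)^2 * ((aeval uu b)^2 + uu * (aeval uu c₁)^2) := by
            rw [uu_eq]; ring
        _ = (1+X)^2 * aeval uu (b^2 + X * c₁^2) := by rw [phi_sq_decomp]
        _ = (1+X) * ((1+X) * aeval uu (b^2 + X * c₁^2)) := by ring
        _ = (1+X) * (X^e + X^f) := by rw [heq]
        _ = (X^e + X^(e+1)) + (X^f + X^(f+1)) := by ring
    rcases Nat.even_or_odd e with ⟨r, hr⟩ | ⟨r, hr⟩ <;>
      rcases Nat.even_or_odd f with ⟨s, hs⟩ | ⟨s, hs⟩
    · -- e = 2r, f = 2s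
      have hrs : r < s := by omega
      have hsplit := parity_split (ev_sq _) (od_X_mul_sq _)
        (ev_add (ev_X_pow e ⟨r, by omega⟩) (ev_X_pow f ⟨s, by omega⟩))
        (od_add (od_X_pow (e+1) (by omega)) (od_X_pow (f+1) (by omega)))
        (by rw [key]; ring)
      obtain ⟨hE, hO⟩ := hsplit
      have hb : (1+X) * aeval uu b = X^r + X^s := by
        apply sq_inj
        rw [hE, CharTwo.add_sq, ← pow_mul, ← pow_mul, hr, hs]
        ring_nf
      obtain ⟨hb1, hr0, hs1⟩ := IH s (by omega) b r hrs hb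
      -- now r = 0, s = 1, so e = 0, f = 2; odd part gives contradiction
      exfalso
      have hO' : X * ((1+X)^2 * aeval uu c₁)^2 = X * ((1:R2)+X)^2 := by
        rw [hO, show e + 1 = 1 by omega, show f + 1 = 3 by omega]
        linear_combination (-(X^2) : R2) * two_zero
      have h5 : ((1+X)^2 * aeval uu c₁)^2 = ((1:R2)+X)^2 :=
        mul_left_cancel₀ hXne hO'
      have h6 : (1+X)^2 * aeval uu c₁ = 1+X := sq_inj h5
      by_cases hc0 : aeval uu c₁ = 0
      · rw [hc0, mul_zero] at h6; exact hX1ne h6.symm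
      · have hdeg := congrArg natDegree h6
        rw [natDegree_mul (pow_ne_zero 2 hX1ne) hc0, natDeg_one_add_X_sq,
          natDeg_one_add_X] at hdeg
        omega
    · -- e = 2r even, f = 2s+1 odd
      have hsplit := parity_split (ev_sq ((1+X) * aeval uu b)) (od_X_mul_sq _)
        (ev_add (ev_X_pow e ⟨r, by omega⟩) (ev_X_pow (f+1) ⟨s+1, by omega⟩))
        (od_add (od_X_pow (e+1) (by omega)) (od_X_pow f (by omega)))
        (by rw [key]; ring)
      obtain ⟨hE, hO⟩ := hsplit
      have hb : (1+X) * aeval uu b = X^r + X^(s+1) := by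
        apply sq_inj
        rw [CharTwo.add_sq, ← pow_mul, ← pow_mul, hE,
          show e = r*2 by omega, show f+1 = (s+1)*2 by omega]
      obtain ⟨hb1, hr0, hs1⟩ := IH (s+1) (by omega) b r (by omega) hb
      omega
    · -- e = 2r+1 odd, f = 2s even
      have hsplit := parity_split (ev_sq ((1+X) * aeval uu b)) (od_X_mul_sq _)
        (ev_add (ev_X_pow (e+1) ⟨r+1, by omega⟩) (ev_X_pow f ⟨s, by omega⟩))
        (od_add (od_X_pow e (by omega)) (od_X_pow (f+1) (by omega)))
        (by rw [key]; ring)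
      obtain ⟨hE, hO⟩ := hsplit
      have hb : (1+X) * aeval uu b = X^(r+1) + X^s := by
        apply sq_inj
        rw [CharTwo.add_sq, ← pow_mul, ← pow_mul, hE,
          show e+1 = (r+1)*2 by omega, show f = s*2 by omega]
      obtain ⟨hb1, hr0, hs1⟩ := IH s (by omega) b (r+1) (by omega) hb
      omega
    · -- e = 2r+1 odd, f = 2s+1 odd
      have hsplit := parity_split (ev_sq ((1+X) * aeval uu b)) (od_X_mul_sq _)
        (ev_add (ev_X_pow (e+1) ⟨r+1, by omega⟩) (ev_X_pow (f+1) ⟨s+1, by omega⟩))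
        (od_add (od_X_pow e (by omega)) (od_X_pow f (by omega)))
        (by rw [key]; ring)
      obtain ⟨hE, hO⟩ := hsplit
      have hb : (1+X) * aeval uu b = X^(r+1) + X^(s+1) := by
        apply sq_inj
        rw [CharTwo.add_sq, ← pow_mul, ← pow_mul, hE,
          show e+1 = (r+1)*2 by omega, show f+1 = (s+1)*2 by omega]
      obtain ⟨hb1, hr0, hs1⟩ := IH (s+1) (by omega) b (r+1) (by omega) hb
      omega

lemma ev_zero : Ev (0 : R2) := fun k _ => by simp

lemma odd_power_contra {c : R2} {t : ℕ} (h : X * ((1+X) * aeval uu c)^2 = X^t) : False := by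
  have h1 := congrArg (Polynomial.eval 1) h
  rw [eval_mul, eval_pow, eval_mul, eval_add, eval_one, eval_X, eval_pow, eval_X,
    show (1 + 1 : ZMod 2) = 0 by decide, zero_mul, one_mul, one_pow] at h1
  norm_num at h1

lemma Mlem : ∀ m : ℕ, ∀ a : R2, ∀ n : ℕ, n < m → aeval uu a = X^n + X^m →
    ∃ k, a = X^(2^k) := by
  intro m
  induction m using Nat.strong_induction_on with
  | _ m IH =>
  intro a n hnm heq
  obtain ⟨b, c, rfl⟩ := exists_sq_decomp a
  have key : (aeval uu b)^2 + X * ((1+X) * aeval uu c)^2 = X^n + X^m := by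
    calc (aeval uu b)^2 + X * ((1+X) * aeval uu c)^2
        = (aeval uu b)^2 + uu * (aeval uu c)^2 := by rw [uu_eq]; ring
      _ = aeval uu (b^2 + X * c^2) := (phi_sq_decomp b c).symm
      _ = X^n + X^m := heq
  rcases Nat.even_or_odd n with ⟨r, hr⟩ | ⟨r, hr⟩ <;>
    rcases Nat.even_or_odd m with ⟨s, hs⟩ | ⟨s, hs⟩
  · -- both even
    have hsplit := parity_split (ev_sq (aeval uu b)) (od_X_mul_sq _)
      (ev_add (ev_X_pow n ⟨r, by omega⟩) (ev_X_pow m ⟨s, by omega⟩)) od_zero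
      (by rw [add_zero, key])
    obtain ⟨hE, hO⟩ := hsplit
    have hb : aeval uu b = X^r + X^s := by
      apply sq_inj
      rw [CharTwo.add_sq, ← pow_mul, ← pow_mul, hE,
        show n = r*2 by omega, show m = s*2 by omega]
    obtain ⟨j, hj⟩ := IH s (by omega) b r (by omega) hb
    have hc : aeval uu c = 0 := by
      have h1 : ((1+X) * aeval uu c)^2 = 0 := by
        have := mul_left_cancel₀ hXne (hO.trans (mul_zero X).symm)
        exact this
      have h2 := pow_eq_zero_iff (n := 2) (by norm_num) |>.mp h1
      rcases mul_eq_zero.mp h2 with h | h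
      · exact absurd h hX1ne
      · exact h
    have hc0 : c = 0 := phi_eq_zero hc
    refine ⟨j+1, ?_⟩
    rw [hj, hc0, show (2:ℕ)^(j+1) = 2^j*2 by ring, pow_mul]
    ring
  · -- n even, m odd : contradiction
    have hsplit := parity_split (ev_sq (aeval uu b)) (od_X_mul_sq _)
      (ev_X_pow n ⟨r, by omega⟩) (od_X_pow m (by omega))
      (by rw [key])
    exact absurd hsplit.2 (fun h => odd_power_contra h)
  · -- n odd, m even : contradiction
    have hsplit := parity_split (ev_sq (aeval uu b)) (od_X_mul_sq _)
      (ev_X_pow m ⟨s, by omega⟩) (od_X_pow n (by omega))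
      (by rw [key]; ring)
    exact absurd hsplit.2 (fun h => odd_power_contra h)
  · -- both odd
    have hsplit := parity_split (ev_sq (aeval uu b)) (od_X_mul_sq _)
      ev_zero (od_add (od_X_pow n (by omega)) (od_X_pow m (by omega)))
      (by rw [key]; ring)
    obtain ⟨hE, hO⟩ := hsplit
    have hb0 : b = 0 := by
      apply phi_eq_zero
      have := pow_eq_zero_iff (n := 2) (by norm_num) |>.mp hE
      exact this
    have hO' : X * ((1+X) * aeval uu c)^2 = X * (X^r + X^s)^2 := by
      rw [hO, CharTwo.add_sq, ← pow_mul, ← pow_mul,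
        show n = r*2+1 by omega, show m = s*2+1 by omega]
      ring
    have h2 : ((1+X) * aeval uu c)^2 = (X^r + X^s)^2 := mul_left_cancel₀ hXne hO'
    have h3 : (1+X) * aeval uu c = X^r + X^s := sq_inj h2
    obtain ⟨hc1, hr0, hs1⟩ := Qlem s c r (by omega) h3
    refine ⟨0, ?_⟩
    rw [hb0, hc1]
    simp

lemma phi_pow (k : ℕ) : aeval uu ((X:R2)^(2^k)) = X^(2^k) + X^(3*2^k) := by
  rw [map_pow, aeval_X]
  unfold uu
  rw [add_pow_char_pow, ← pow_mul]

theorem stmt2 (a : Polynomial (ZMod 2)) :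
    ((∃ n m : ℕ, n ≠ m ∧
        Polynomial.aeval ((Polynomial.X : Polynomial (ZMod 2)) + Polynomial.X ^ 3) a =
          Polynomial.X ^ n + Polynomial.X ^ m) ↔
      ∃ k : ℕ, a = Polynomial.X ^ (2 ^ k)) ∧
    ∀ k : ℕ,
      Polynomial.aeval ((Polynomial.X : Polynomial (ZMod 2)) + Polynomial.X ^ 3)
          ((Polynomial.X : Polynomial (ZMod 2)) ^ (2 ^ k)) =
        Polynomial.X ^ (2 ^ k) + Polynomial.X ^ (3 * 2 ^ k) := by
  have hu : (Polynomial.X + Polynomial.X ^ 3 : Polynomial (ZMod 2)) = uu := rfl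
  constructor
  · constructor
    · rintro ⟨n, m, hnm, h⟩
      rw [hu] at h
      rcases lt_or_gt_of_ne hnm with h' | h'
      · exact Mlem m a n h' h
      · exact Mlem n a m h' (by rw [h, add_comm])
    · rintro ⟨k, rfl⟩
      refine ⟨2^k, 3*2^k, ?_, ?_⟩
      · have : 0 < 2^k := pow_pos (by norm_num) k
        omega
      · rw [hu]; exact phi_pow k
  · intro k
    rw [hu]; exact phi_pow k
end

section
/- Let S₁ and S₂ each be a finite union of cosets of subsemigroups of ℕ^k, where a subsemigroup of ℕ^k means a set of the form L ∩ ℕ^k for L a subgroup of ℤ^k, and a coset means a set v + (L ∩ ℕ^k) with v ∈ ℕ^k. Then S₁ ∩ S₂ is again a finite union of cosets of subsemigroups of ℕ^k. -/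
/-- A finite union of cosets of subsemigroups of ℕ^k, where a subsemigroup of ℕ^k
is the intersection of a subgroup of ℤ^k with ℕ^k. -/
def IsFinUnionCosets {k : ℕ} (S : Set (Fin k → ℕ)) : Prop :=
  ∃ (n : ℕ) (v : Fin n → (Fin k → ℕ)) (L : Fin n → AddSubgroup (Fin k → ℤ)),
    S = ⋃ i : Fin n,
      {x : Fin k → ℕ | ∃ w ∈ L i, (∀ j, 0 ≤ w j) ∧ ∀ j, (x j : ℤ) = (v i j : ℤ) + w j}

def coset {k : ℕ} (v : Fin k → ℕ) (L : AddSubgroup (Fin k → ℤ)) : Set (Fin k → ℕ) :=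
  {x : Fin k → ℕ | ∃ w ∈ L, (∀ j, 0 ≤ w j) ∧ ∀ j, (x j : ℤ) = (v j : ℤ) + w j}

lemma mem_coset {k : ℕ} {v x : Fin k → ℕ} {L : AddSubgroup (Fin k → ℤ)} :
    x ∈ coset v L ↔ (fun j => (x j : ℤ) - v j) ∈ L ∧ ∀ j, v j ≤ x j := by
  constructor
  · rintro ⟨w, hw, hw0, hx⟩
    have : (fun j => (x j : ℤ) - v j) = w := by
      funext j; rw [hx j]; ring
    rw [this]
    refine ⟨hw, fun j => ?_⟩
    have := hw0 j
    have := hx j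
    omega
  · rintro ⟨hL, hle⟩
    exact ⟨_, hL, fun j => by have := hle j; simp; omega, fun j => by ring⟩

lemma empty_isFinUnionCosets {k : ℕ} : IsFinUnionCosets (∅ : Set (Fin k → ℕ)) :=
  ⟨0, Fin.elim0, Fin.elim0, by simp⟩

lemma core {k : ℕ} (L : AddSubgroup (Fin k → ℤ)) (T : Set (Fin k → ℕ))
    (ha : ∀ x ∈ T, ∀ y ∈ T, (fun j => (x j : ℤ) - y j) ∈ L)
    (hb : ∀ y ∈ T, ∀ x : Fin k → ℕ, (fun j => (x j : ℤ) - y j) ∈ L → (∀ j, y j ≤ x j) → x ∈ T) :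
    IsFinUnionCosets T := by
  classical
  -- minimal elements of T
  set M : Set (Fin k → ℕ) := {x ∈ T | ∀ y ∈ T, y ≤ x → y = x} with hM
  have hwf : WellFounded ((· < ·) : (Fin k → ℕ) → (Fin k → ℕ) → Prop) := by
    have := (Set.isPWO_of_wellQuasiOrderedLE
      (Set.univ : Set (Fin k → ℕ))).isWF
    rw [Set.isWF_univ_iff] at this
    exact this.wf
  -- every element of T lies above a minimal element
  have hcover : ∀ x ∈ T, ∃ v ∈ M, v ≤ x := by
    intro x hx
    obtain ⟨v, hv, hvmin⟩ := hwf.has_min {y ∈ T | y ≤ x} ⟨x, hx, le_refl x⟩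
    refine ⟨v, ⟨hv.1, fun y hy hle => ?_⟩, hv.2⟩
    by_contra hne
    exact hvmin y ⟨hy, hle.trans hv.2⟩ (lt_of_le_of_ne hle hne)
  -- M is a finite antichain
  have hanti : IsAntichain (· ≤ ·) M := by
    intro a ha' b hb' hne hle
    exact hne (hb'.2 a ha'.1 hle)
  have hPWO : M.PartiallyWellOrderedOn (· ≤ ·) :=
    Set.isPWO_of_wellQuasiOrderedLE M
  have hMfin : M.Finite := hanti.finite_of_partiallyWellOrderedOn hPWO
  have hT : T = ⋃ v ∈ M, coset v L := by
    ext x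
    simp only [Set.mem_iUnion]
    constructor
    · intro hx
      obtain ⟨v, hvM, hvx⟩ := hcover x hx
      exact ⟨v, hvM, mem_coset.2 ⟨ha x hx v hvM.1, hvx⟩⟩
    · rintro ⟨v, hvM, hxv⟩
      obtain ⟨hL, hle⟩ := mem_coset.1 hxv
      exact hb v hvM.1 x hL hle
  refine ⟨hMfin.toFinset.card, fun i => (hMfin.toFinset.equivFin.symm i : Fin k → ℕ),
    fun _ => L, ?_⟩
  rw [hT]; ext x
  simp only [Set.mem_iUnion]
  constructor
  · rintro ⟨v, hvM, hxv⟩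
    refine ⟨hMfin.toFinset.equivFin ⟨v, hMfin.mem_toFinset.2 hvM⟩, ?_⟩
    show x ∈ coset _ L
    simpa using hxv
  · rintro ⟨i, hx⟩
    exact ⟨_, hMfin.mem_toFinset.1 (hMfin.toFinset.equivFin.symm i).2, hx⟩

lemma coset_inter_coset {k : ℕ} (v₁ v₂ : Fin k → ℕ) (L₁ L₂ : AddSubgroup (Fin k → ℤ)) :
    IsFinUnionCosets (coset v₁ L₁ ∩ coset v₂ L₂) := by
  apply core (L₁ ⊓ L₂)
  · rintro x ⟨hx1, hx2⟩ y ⟨hy1, hy2⟩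
    obtain ⟨hx1L, _⟩ := mem_coset.1 hx1
    obtain ⟨hy1L, _⟩ := mem_coset.1 hy1
    obtain ⟨hx2L, _⟩ := mem_coset.1 hx2
    obtain ⟨hy2L, _⟩ := mem_coset.1 hy2
    constructor
    · have := sub_mem hx1L hy1L
      show _ ∈ L₁
      convert this using 1
      funext j; simp
    · have := sub_mem hx2L hy2L
      show _ ∈ L₂
      convert this using 1
      funext j; simp
  · rintro y ⟨hy1, hy2⟩ x hxy hle
    obtain ⟨hy1L, hle1⟩ := mem_coset.1 hy1
    obtain ⟨hy2L, hle2⟩ := mem_coset.1 hy2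
    constructor
    · refine mem_coset.2 ⟨?_, fun j => (hle1 j).trans (hle j)⟩
      have : _ ∈ L₁ := add_mem hxy.1 hy1L
      convert this using 1
      funext j; simp
    · refine mem_coset.2 ⟨?_, fun j => (hle2 j).trans (hle j)⟩
      have : _ ∈ L₂ := add_mem hxy.2 hy2L
      convert this using 1
      funext j; simp

lemma union_isFinUnionCosets {k : ℕ} {S T : Set (Fin k → ℕ)}
    (hS : IsFinUnionCosets S) (hT : IsFinUnionCosets T) : IsFinUnionCosets (S ∪ T) := by
  obtain ⟨n, v, L, rfl⟩ := hS
  obtain ⟨m, u, K, rfl⟩ := hT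
  refine ⟨n + m, Fin.append v u, Fin.append L K, ?_⟩
  ext x
  simp only [Set.mem_union, Set.mem_iUnion]
  constructor
  · rintro (⟨i, hx⟩ | ⟨i, hx⟩)
    · exact ⟨Fin.castAdd m i, by simpa [Fin.append_left] using hx⟩
    · exact ⟨Fin.natAdd n i, by simpa [Fin.append_right] using hx⟩
  · rintro ⟨i, hx⟩
    refine Fin.addCases (fun i hx => ?_) (fun i hx => ?_) i hx
    · exact Or.inl ⟨i, by simpa [Fin.append_left] using hx⟩
    · exact Or.inr ⟨i, by simpa [Fin.append_right] using hx⟩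

lemma iUnion_isFinUnionCosets {k : ℕ} : ∀ (n : ℕ) (S : Fin n → Set (Fin k → ℕ)),
    (∀ i, IsFinUnionCosets (S i)) → IsFinUnionCosets (⋃ i, S i) := by
  intro n
  induction n with
  | zero => intro S _; simpa using empty_isFinUnionCosets
  | succ n ih =>
    intro S hS
    have : (⋃ i, S i) = S 0 ∪ ⋃ i : Fin n, S i.succ := by
      ext x; simp [Set.mem_iUnion, Fin.exists_fin_succ]
    rw [this]
    exact union_isFinUnionCosets (hS 0) (ih _ fun i => hS i.succ)

theorem stmt17 {k : ℕ} (S₁ S₂ : Set (Fin k → ℕ))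
    (h₁ : IsFinUnionCosets S₁) (h₂ : IsFinUnionCosets S₂) :
    IsFinUnionCosets (S₁ ∩ S₂) := by
  obtain ⟨n₁, v₁, L₁, rfl⟩ := h₁
  obtain ⟨n₂, v₂, L₂, rfl⟩ := h₂
  have heq : (⋃ i, coset (v₁ i) (L₁ i)) ∩ (⋃ j, coset (v₂ j) (L₂ j)) =
      ⋃ i, ⋃ j, (coset (v₁ i) (L₁ i) ∩ coset (v₂ j) (L₂ j)) := by
    ext x
    simp only [Set.mem_inter_iff, Set.mem_iUnion]
    tauto
  show IsFinUnionCosets ((⋃ i, coset (v₁ i) (L₁ i)) ∩ (⋃ j, coset (v₂ j) (L₂ j)))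
  rw [heq]
  exact iUnion_isFinUnionCosets _ _ fun i =>
    iUnion_isFinUnionCosets _ _ fun j => coset_inter_coset _ _ _ _
end
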